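/- Let X be a nonempty finite type with |X| ≥ 2, Y a finite type, v : X → EuclideanSpace ℂ Y a family of unit vectors, x* ∈ X, and let Ψ, Ψ' be the public-key state and the punctured public-key state. For every natural number p, the Hermitian matrix |Ψ^{⊗p}⟩⟨Ψ^{⊗p}| − |Ψ'^{⊗p}⟩⟨Ψ'^{⊗p}| (indexed by Fin p → X × Y) has trace norm equal to 2 · Real.sqrt(1 − ((|X| − 1)/|X|)^p); equivalently, the trace distance between the pure states Ψ^{⊗p} and Ψ'^{⊗p} equals √(1 − (1 − 1/|X|)^p). -/

import Mathlib

/-- The public-key state `Ψ(x,y) = |X|^{-1/2} · (v x)(y)`. -/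
noncomputable def pubKey (X Y : Type) [Fintype X] [Fintype Y]
    (v : X → EuclideanSpace ℂ Y) : EuclideanSpace ℂ (X × Y) :=
  WithLp.toLp 2 fun p => ((Real.sqrt (Fintype.card X))⁻¹ : ℂ) * v p.1 p.2

/-- The punctured public-key state `Ψ'`, vanishing on the branch `x*` and renormalized. -/
noncomputable def puncKey (X Y : Type) [Fintype X] [Fintype Y] [DecidableEq X]
    (v : X → EuclideanSpace ℂ Y) (xstar : X) : EuclideanSpace ℂ (X × Y) :=
  WithLp.toLp 2 fun p => if p.1 = xstar then 0
    else ((Real.sqrt ((Fintype.card X : ℝ) - 1))⁻¹ : ℂ) * v p.1 p.2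

/-- The `p`-fold tensor power of `ψ : EuclideanSpace ℂ α`. -/
noncomputable def tensorPow {α : Type} [Fintype α] (ψ : EuclideanSpace ℂ α) (p : ℕ) :
    EuclideanSpace ℂ (Fin p → α) :=
  WithLp.toLp 2 fun a => ∏ i, ψ (a i)

set_option linter.unusedSectionVars false

open Matrix Finset


open Matrix Finset
open scoped ComplexConjugate

-- rank lemmas
lemma myRank_sub_le {n : Type} [Fintype n] (A B : Matrix n n ℂ) :
    (A - B).rank ≤ A.rank + B.rank := by
  rw [Matrix.rank, Matrix.rank, Matrix.rank]
  have hr : LinearMap.range (A - B).mulVecLin ≤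
      LinearMap.range A.mulVecLin ⊔ LinearMap.range B.mulVecLin := by
    rintro x ⟨y, rfl⟩
    have : (A - B).mulVecLin y = A.mulVecLin y - B.mulVecLin y := by
      simp [Matrix.mulVecLin_apply, Matrix.sub_mulVec]
    rw [this]
    exact sub_mem (Submodule.mem_sup_left ⟨y, rfl⟩) (Submodule.mem_sup_right ⟨y, rfl⟩)
  exact le_trans (Submodule.finrank_mono hr)
    (Submodule.finrank_add_le_finrank_add_finrank _ _)

lemma myRank_vecMulVec_le {n : Type} [Fintype n] (w v : n → ℂ) :
    (Matrix.vecMulVec w v).rank ≤ 1 := by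
  rw [Matrix.vecMulVec_eq (Fin 1)]
  exact le_trans (Matrix.rank_mul_le_left _ _)
    (le_trans (Matrix.rank_le_card_width _) (by simp))

open Matrix Finset
open scoped ComplexConjugate

lemma myComb {n : Type} [Fintype n] [DecidableEq n] (f : n → ℝ)
    (h0 : ∑ i, f i = 0) (hcard : (univ.filter (fun i => f i ≠ 0)).card ≤ 2) :
    (∑ i, |f i|) ^ 2 = 2 * ∑ i, (f i) ^ 2 := by
  set S := univ.filter (fun i => f i ≠ 0) with hS
  have hsum : ∀ g : n → ℝ, (∀ i, f i = 0 → g i = 0) → ∑ i, g i = ∑ i ∈ S, g i := by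
    intro g hg
    refine (Finset.sum_subset (Finset.subset_univ S) ?_).symm
    intro i _ hi
    simp only [hS, mem_filter, mem_univ, true_and, not_not] at hi
    exact hg i hi
  have h0' : ∑ i ∈ S, f i = 0 := by rw [← hsum f (fun i h => h)]; exact h0
  have habs : ∑ i, |f i| = ∑ i ∈ S, |f i| := hsum _ (fun i h => by simp [h])
  have hsq : ∑ i, (f i) ^ 2 = ∑ i ∈ S, (f i) ^ 2 := hsum _ (fun i h => by simp [h])
  clear_value S
  rw [habs, hsq]
  interval_cases h : S.card
  · obtain rfl : S = ∅ := Finset.card_eq_zero.mp h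
    simp
  · obtain ⟨i, rfl⟩ := Finset.card_eq_one.mp h
    have : f i ≠ 0 := by
      have hm := Finset.mem_singleton_self i
      rw [hS] at hm; simp only [mem_filter] at hm; exact hm.2
    simp only [Finset.sum_singleton] at h0'
    exact absurd h0' this
  · obtain ⟨i, j, hij, rfl⟩ := Finset.card_eq_two.mp h
    rw [Finset.sum_pair hij] at h0' ⊢
    rw [Finset.sum_pair hij]
    have : f j = -f i := by linarith
    rw [this, abs_neg]
    nlinarith [sq_abs (f i)]
open scoped ComplexConjugate

variable {n : Type} [Fintype n] [DecidableEq n]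


lemma myTrace {n : Type} [Fintype n] [DecidableEq n] {M : Matrix n n ℂ}
    (hM : M.IsHermitian) : M.trace = ∑ i, (hM.eigenvalues i : ℂ) := by
  conv_lhs => rw [hM.spectral_theorem, Unitary.conjStarAlgAut_apply]
  rw [Matrix.trace_mul_cycle]
  rw [Matrix.mem_unitaryGroup_iff'.mp hM.eigenvectorUnitary.2, Matrix.one_mul]
  simp [Matrix.trace, Matrix.diag]

lemma myTraceSq {n : Type} [Fintype n] [DecidableEq n] {M : Matrix n n ℂ}
    (hM : M.IsHermitian) : (M * M).trace = ∑ i, ((hM.eigenvalues i : ℂ)) ^ 2 := by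
  set U : Matrix n n ℂ := (hM.eigenvectorUnitary : Matrix n n ℂ) with hU
  set D : Matrix n n ℂ := Matrix.diagonal (RCLike.ofReal ∘ hM.eigenvalues) with hD
  have hsU : star U * U = 1 := Matrix.mem_unitaryGroup_iff'.mp hM.eigenvectorUnitary.2
  have h1 : M * M = U * (D * D) * star U := by
    conv_lhs => rw [hM.spectral_theorem, Unitary.conjStarAlgAut_apply]
    rw [← hU, ← hD]
    simp only [← Matrix.mul_assoc]
    rw [Matrix.mul_assoc (U * D) (star U) U, hsU, Matrix.mul_one, Matrix.mul_assoc U D D]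
  rw [h1, Matrix.trace_mul_cycle, ← Matrix.mul_assoc, hsU, Matrix.one_mul, hD,
    Matrix.diagonal_mul_diagonal]
  simp [Matrix.trace, Matrix.diag, sq]

lemma myHerm (ψ φ : n → ℂ) :
    (Matrix.of fun a b : n => ψ a * conj (ψ b) - φ a * conj (φ b)).IsHermitian := by
  ext a b
  simp [Matrix.conjTranspose_apply, mul_comm]

lemma myTr0 (ψ φ : n → ℂ) (hψ : ∑ a, conj (ψ a) * ψ a = 1)
    (hφ : ∑ a, conj (φ a) * φ a = 1) :
    (Matrix.of fun a b : n => ψ a * conj (ψ b) - φ a * conj (φ b)).trace = 0 := by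
  simp only [Matrix.trace, Matrix.diag, Matrix.of_apply]
  rw [Finset.sum_sub_distrib]
  have e1 : ∑ a, ψ a * conj (ψ a) = 1 := by rw [← hψ]; exact Finset.sum_congr rfl (by intros; ring)
  have e2 : ∑ a, φ a * conj (φ a) = 1 := by rw [← hφ]; exact Finset.sum_congr rfl (by intros; ring)
  rw [e1, e2, sub_self]

lemma myTr2 (ψ φ : n → ℂ) (c : ℝ) (hψ : ∑ a, conj (ψ a) * ψ a = 1)
    (hφ : ∑ a, conj (φ a) * φ a = 1) (hc : ∑ a, conj (ψ a) * φ a = (c : ℂ)) :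
    ((Matrix.of fun a b : n => ψ a * conj (ψ b) - φ a * conj (φ b)) *
     (Matrix.of fun a b : n => ψ a * conj (ψ b) - φ a * conj (φ b))).trace
      = 2 - 2 * (c : ℂ) ^ 2 := by
  have hc' : ∑ a, conj (φ a) * ψ a = (c : ℂ) := by
    have := congrArg (starRingEnd ℂ) hc
    simpa [map_sum, mul_comm] using this
  have key : ∀ a b : n,
      (ψ a * conj (ψ b) - φ a * conj (φ b)) * (ψ b * conj (ψ a) - φ b * conj (φ a))
      = (conj (ψ a) * ψ a) * (conj (ψ b) * ψ b)
        - (conj (φ a) * ψ a) * (conj (ψ b) * φ b)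
        - (conj (ψ a) * φ a) * (conj (φ b) * ψ b)
        + (conj (φ a) * φ a) * (conj (φ b) * φ b) := by intros; ring
  simp only [Matrix.trace, Matrix.diag, Matrix.mul_apply, Matrix.of_apply]

  calc (∑ a, ∑ b, (ψ a * conj (ψ b) - φ a * conj (φ b)) * (ψ b * conj (ψ a) - φ b * conj (φ a)))
      = ∑ a, ∑ b, ((conj (ψ a) * ψ a) * (conj (ψ b) * ψ b)
        - (conj (φ a) * ψ a) * (conj (ψ b) * φ b)
        - (conj (ψ a) * φ a) * (conj (φ b) * ψ b)
        + (conj (φ a) * φ a) * (conj (φ b) * φ b)) := by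
        exact Finset.sum_congr rfl fun a _ => Finset.sum_congr rfl fun b _ => key a b
    _ = (∑ a, conj (ψ a) * ψ a) * (∑ b, conj (ψ b) * ψ b)
        - (∑ a, conj (φ a) * ψ a) * (∑ b, conj (ψ b) * φ b)
        - (∑ a, conj (ψ a) * φ a) * (∑ b, conj (φ b) * ψ b)
        + (∑ a, conj (φ a) * φ a) * (∑ b, conj (φ b) * φ b) := by
        simp only [Finset.sum_add_distrib, Finset.sum_sub_distrib, ← Finset.sum_mul,
          ← Finset.mul_sum]
    _ = 2 - 2 * (c : ℂ) ^ 2 := by rw [hψ, hφ, hc, hc']; ring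

lemma myMaster (ψ φ : n → ℂ) (c : ℝ) (hψ : ∑ a, conj (ψ a) * ψ a = 1)
    (hφ : ∑ a, conj (φ a) * φ a = 1) (hc : ∑ a, conj (ψ a) * φ a = (c : ℂ))
    (hM : (Matrix.of fun a b : n => ψ a * conj (ψ b) - φ a * conj (φ b)).IsHermitian) :
    ∑ i, |hM.eigenvalues i| = 2 * Real.sqrt (1 - c ^ 2) := by
  set f := hM.eigenvalues with hf
  have h1 : ∑ i, f i = 0 := by
    have h := myTrace hM
    rw [myTr0 ψ φ hψ hφ] at h
    have : ((∑ i, f i : ℝ) : ℂ) = 0 := by push_cast; rw [← h]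
    exact_mod_cast this
  have h2 : ∑ i, f i ^ 2 = 2 - 2 * c ^ 2 := by
    have h := myTraceSq hM
    rw [myTr2 ψ φ c hψ hφ hc] at h
    have : ((∑ i, f i ^ 2 : ℝ) : ℂ) = ((2 - 2 * c ^ 2 : ℝ) : ℂ) := by push_cast; rw [← h]
    exact_mod_cast this
  have hMeq : (Matrix.of fun a b : n => ψ a * conj (ψ b) - φ a * conj (φ b))
      = Matrix.vecMulVec ψ (star ψ) - Matrix.vecMulVec φ (star φ) := by
    ext a b
    simp [Matrix.vecMulVec_apply, Pi.star_apply, RCLike.star_def]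
  have hrank : (Matrix.of fun a b : n =>
      ψ a * conj (ψ b) - φ a * conj (φ b)).rank ≤ 2 := by
    rw [hMeq]
    calc (Matrix.vecMulVec ψ (star ψ) - Matrix.vecMulVec φ (star φ)).rank
        ≤ (Matrix.vecMulVec ψ (star ψ)).rank + (Matrix.vecMulVec φ (star φ)).rank :=
          myRank_sub_le _ _
      _ ≤ 1 + 1 := add_le_add (myRank_vecMulVec_le _ _) (myRank_vecMulVec_le _ _)
      _ = 2 := rfl
  have hcard : (univ.filter (fun i => f i ≠ 0)).card ≤ 2 := by
    have := hM.rank_eq_card_non_zero_eigs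
    rw [Fintype.card_subtype] at this
    rw [← hf] at this
    omega
  have hsq := myComb f h1 hcard
  rw [h2] at hsq
  have h1c : 0 ≤ 1 - c ^ 2 := by
    have : 0 ≤ ∑ i, f i ^ 2 := Finset.sum_nonneg fun i _ => sq_nonneg _
    rw [h2] at this; linarith
  have hnn : 0 ≤ ∑ i, |f i| := Finset.sum_nonneg fun i _ => abs_nonneg _
  rw [← Real.sqrt_sq hnn, hsq, show 2 * (2 - 2 * c ^ 2) = 2 ^ 2 * (1 - c ^ 2) by ring,
    Real.sqrt_mul (by positivity), Real.sqrt_sq (by norm_num)]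



lemma myTensorSum {α : Type} [Fintype α] (ψ φ : EuclideanSpace ℂ α) (p : ℕ) :
    ∑ a : Fin p → α, conj (tensorPow ψ p a) * tensorPow φ p a
      = (∑ x, conj (ψ x) * φ x) ^ p := by
  simp only [tensorPow, map_prod, ← Finset.prod_mul_distrib]
  rw [← Fintype.piFinset_univ,
    ← Finset.prod_univ_sum (fun _ : Fin p => (univ : Finset α))
      (fun _ x => conj (ψ x) * φ x),
    Finset.prod_const, Finset.card_univ, Fintype.card_fin]

lemma myVnorm (X Y : Type) [Fintype X] [Fintype Y] (v : X → EuclideanSpace ℂ Y)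
    (hv : ∀ x, ‖v x‖ = 1) (x : X) : ∑ y, conj (v x y) * v x y = 1 := by
  have h : ∑ y, ‖v x y‖ ^ 2 = 1 := by
    have h1 := hv x
    rw [EuclideanSpace.norm_eq] at h1
    have h0 : 0 ≤ ∑ y, ‖v x y‖ ^ 2 := Finset.sum_nonneg fun _ _ => sq_nonneg _
    nlinarith [Real.sq_sqrt h0]
  calc ∑ y, conj (v x y) * v x y = ∑ y, ((‖v x y‖ : ℂ)) ^ 2 :=
        Finset.sum_congr rfl fun y _ => RCLike.conj_mul (v x y)
    _ = ((∑ y, ‖v x y‖ ^ 2 : ℝ) : ℂ) := by push_cast; ring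
    _ = 1 := by rw [h]; norm_num


lemma myConjMul (r t : ℝ) (z w : ℂ) :
    conj ((r:ℂ)⁻¹ * z) * ((t:ℂ)⁻¹ * w) = ((r:ℂ))⁻¹ * ((t:ℂ))⁻¹ * (conj z * w) := by
  rw [RingHom.map_mul, map_inv₀, Complex.conj_ofReal]; ring

lemma myIteSum (X : Type) [Fintype X] [DecidableEq X] (xstar : X) (C : ℂ) :
    ∑ x : X, (if x = xstar then (0:ℂ) else C) = (Fintype.card X : ℂ) * C - C := by
  calc ∑ x : X, (if x = xstar then (0:ℂ) else C)
      = ∑ x : X, (C - if x = xstar then C else 0) := by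
        refine Finset.sum_congr rfl fun x _ => ?_
        by_cases h : x = xstar <;> simp [h]
    _ = (Fintype.card X : ℂ) * C - C := by
        rw [Finset.sum_sub_distrib, Finset.sum_const, Finset.card_univ, nsmul_eq_mul,
          Finset.sum_ite_eq' univ xstar (fun _ => C), if_pos (Finset.mem_univ xstar)]

lemma mySqInv (r : ℝ) (hr : 0 ≤ r) :
    ((Real.sqrt r : ℂ))⁻¹ * ((Real.sqrt r : ℂ))⁻¹ = ((r⁻¹ : ℝ) : ℂ) := by
  rw [← mul_inv, ← Complex.ofReal_mul, Real.mul_self_sqrt hr, Complex.ofReal_inv]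

lemma myPub1 (X Y : Type) [Fintype X] [Nonempty X] [Fintype Y]
    (v : X → EuclideanSpace ℂ Y) (hv : ∀ x, ‖v x‖ = 1) :
    ∑ q : X × Y, conj (pubKey X Y v q) * pubKey X Y v q = 1 := by
  have hn : (0:ℝ) < (Fintype.card X : ℝ) := by positivity
  simp only [pubKey]
  rw [Fintype.sum_prod_type]
  calc ∑ x : X, ∑ y : Y, conj (((Real.sqrt (Fintype.card X))⁻¹ : ℂ) * v x y) *
          (((Real.sqrt (Fintype.card X))⁻¹ : ℂ) * v x y)
      = ∑ x : X, ((Real.sqrt (Fintype.card X) : ℂ))⁻¹ * ((Real.sqrt (Fintype.card X) : ℂ))⁻¹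
          * ∑ y, conj (v x y) * v x y := by
        refine Finset.sum_congr rfl fun x _ => ?_
        rw [Finset.mul_sum]
        exact Finset.sum_congr rfl fun y _ => myConjMul _ _ _ _
    _ = ∑ _x : X, (((Fintype.card X : ℝ)⁻¹ : ℝ) : ℂ) := by
        refine Finset.sum_congr rfl fun x _ => ?_
        rw [myVnorm X Y v hv, mul_one, mySqInv _ hn.le]
    _ = 1 := by
        rw [Finset.sum_const, Finset.card_univ, nsmul_eq_mul]
        push_cast
        rw [mul_inv_cancel₀]
        exact_mod_cast hn.ne'

lemma myPunc1 (X Y : Type) [Fintype X] [Nonempty X] [Fintype Y] [DecidableEq X]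
    (v : X → EuclideanSpace ℂ Y) (hv : ∀ x, ‖v x‖ = 1) (xstar : X)
    (hX : 2 ≤ Fintype.card X) :
    ∑ q : X × Y, conj (puncKey X Y v xstar q) * puncKey X Y v xstar q = 1 := by
  have hn : (0:ℝ) < (Fintype.card X : ℝ) - 1 := by
    have : (2:ℝ) ≤ (Fintype.card X : ℝ) := by exact_mod_cast hX
    linarith
  simp only [puncKey]
  rw [Fintype.sum_prod_type]
  calc ∑ x : X, ∑ y : Y, conj (if x = xstar then 0 else
          ((Real.sqrt ((Fintype.card X : ℝ) - 1))⁻¹ : ℂ) * v x y) *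
          (if x = xstar then 0 else ((Real.sqrt ((Fintype.card X : ℝ) - 1))⁻¹ : ℂ) * v x y)
      = ∑ x : X, if x = xstar then 0 else (((((Fintype.card X : ℝ) - 1)⁻¹ : ℝ)) : ℂ) := by
        refine Finset.sum_congr rfl fun x _ => ?_
        by_cases h : x = xstar
        · simp [h]
        · simp only [h, if_false]
          calc ∑ y : Y, conj (((Real.sqrt ((Fintype.card X : ℝ) - 1))⁻¹ : ℂ) * v x y) *
                  (((Real.sqrt ((Fintype.card X : ℝ) - 1))⁻¹ : ℂ) * v x y)
              = ((Real.sqrt ((Fintype.card X : ℝ) - 1) : ℂ))⁻¹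
                  * ((Real.sqrt ((Fintype.card X : ℝ) - 1) : ℂ))⁻¹
                  * ∑ y, conj (v x y) * v x y := by
                rw [Finset.mul_sum]
                exact Finset.sum_congr rfl fun y _ => myConjMul _ _ _ _
            _ = (((((Fintype.card X : ℝ) - 1)⁻¹ : ℝ)) : ℂ) := by
                rw [myVnorm X Y v hv, mul_one, mySqInv _ hn.le]
    _ = 1 := by
        rw [myIteSum]
        have hr : ((Fintype.card X : ℝ)) * ((Fintype.card X : ℝ) - 1)⁻¹
            - ((Fintype.card X : ℝ) - 1)⁻¹ = 1 := by
          field_simp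
        exact_mod_cast congrArg (fun r : ℝ => (r : ℂ)) hr

lemma myCross (X Y : Type) [Fintype X] [Nonempty X] [Fintype Y] [DecidableEq X]
    (v : X → EuclideanSpace ℂ Y) (hv : ∀ x, ‖v x‖ = 1) (xstar : X)
    (hX : 2 ≤ Fintype.card X) :
    ∑ q : X × Y, conj (pubKey X Y v q) * puncKey X Y v xstar q
      = ((Real.sqrt (((Fintype.card X : ℝ) - 1) / (Fintype.card X : ℝ))) : ℂ) := by
  have hn : (0:ℝ) < (Fintype.card X : ℝ) - 1 := by
    have : (2:ℝ) ≤ (Fintype.card X : ℝ) := by exact_mod_cast hX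
    linarith
  have hn0 : (0:ℝ) < (Fintype.card X : ℝ) := by positivity
  simp only [pubKey, puncKey]
  rw [Fintype.sum_prod_type]
  calc ∑ x : X, ∑ y : Y, conj (((Real.sqrt (Fintype.card X))⁻¹ : ℂ) * v x y) *
          (if x = xstar then 0 else ((Real.sqrt ((Fintype.card X : ℝ) - 1))⁻¹ : ℂ) * v x y)
      = ∑ x : X, if x = xstar then 0 else
          ((Real.sqrt (Fintype.card X) : ℂ))⁻¹
            * ((Real.sqrt ((Fintype.card X : ℝ) - 1) : ℂ))⁻¹ := by
        refine Finset.sum_congr rfl fun x _ => ?_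
        by_cases h : x = xstar
        · simp [h]
        · simp only [h, if_false]
          calc ∑ y : Y, conj (((Real.sqrt (Fintype.card X))⁻¹ : ℂ) * v x y) *
                  (((Real.sqrt ((Fintype.card X : ℝ) - 1))⁻¹ : ℂ) * v x y)
              = ((Real.sqrt (Fintype.card X) : ℂ))⁻¹
                  * ((Real.sqrt ((Fintype.card X : ℝ) - 1) : ℂ))⁻¹
                  * ∑ y, conj (v x y) * v x y := by
                rw [Finset.mul_sum]
                exact Finset.sum_congr rfl fun y _ => myConjMul _ _ _ _
            _ = ((Real.sqrt (Fintype.card X) : ℂ))⁻¹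
                  * ((Real.sqrt ((Fintype.card X : ℝ) - 1) : ℂ))⁻¹ := by
                rw [myVnorm X Y v hv, mul_one]
    _ = ((Real.sqrt (((Fintype.card X : ℝ) - 1) / (Fintype.card X : ℝ))) : ℂ) := by
        rw [myIteSum, ← Complex.ofReal_inv, ← Complex.ofReal_inv, ← Complex.ofReal_mul]
        have hr : ((Fintype.card X : ℝ))
              * ((Real.sqrt (Fintype.card X))⁻¹ * (Real.sqrt ((Fintype.card X : ℝ) - 1))⁻¹)
            - ((Real.sqrt (Fintype.card X))⁻¹ * (Real.sqrt ((Fintype.card X : ℝ) - 1))⁻¹)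
            = Real.sqrt (((Fintype.card X : ℝ) - 1) / (Fintype.card X : ℝ)) := by
          have h1 : Real.sqrt ((Fintype.card X : ℝ) - 1) ≠ 0 :=
            (Real.sqrt_pos.mpr hn).ne'
          have h2 : Real.sqrt (Fintype.card X : ℝ) ≠ 0 := (Real.sqrt_pos.mpr hn0).ne'
          rw [Real.sqrt_div hn.le]
          rw [div_eq_mul_inv]
          have e1 : ((Fintype.card X : ℝ)) = Real.sqrt (Fintype.card X) *
              Real.sqrt (Fintype.card X) := (Real.mul_self_sqrt hn0.le).symm
          have e2 : ((Fintype.card X : ℝ)) - 1 = Real.sqrt ((Fintype.card X : ℝ) - 1) *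
              Real.sqrt ((Fintype.card X : ℝ) - 1) := (Real.mul_self_sqrt hn.le).symm
          field_simp
          nlinarith [Real.mul_self_sqrt hn0.le, Real.mul_self_sqrt hn.le,
            Real.sqrt_nonneg ((Fintype.card X : ℝ) - 1), Real.sqrt_nonneg (Fintype.card X : ℝ)]
        exact_mod_cast congrArg (fun r : ℝ => (r : ℂ)) hr

theorem stmt3 (X Y : Type) [Fintype X] [Nonempty X] [Fintype Y]
    [DecidableEq X] [DecidableEq Y]
    (v : X → EuclideanSpace ℂ Y) (hv : ∀ x, ‖v x‖ = 1)
    (xstar : X) (hX : 2 ≤ Fintype.card X) (p : ℕ) :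
    ∃ hM : (Matrix.of fun a b : Fin p → X × Y =>
        tensorPow (pubKey X Y v) p a *
            (starRingEnd ℂ) (tensorPow (pubKey X Y v) p b) -
          tensorPow (puncKey X Y v xstar) p a *
            (starRingEnd ℂ) (tensorPow (puncKey X Y v xstar) p b)).IsHermitian,
      (∑ i, |hM.eigenvalues i| =
        2 * Real.sqrt (1 - (((Fintype.card X : ℝ) - 1) / (Fintype.card X : ℝ)) ^ p)) ∧
      (1 / 2 * ∑ i, |hM.eigenvalues i| =
        Real.sqrt (1 - (1 - 1 / (Fintype.card X : ℝ)) ^ p)) := by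
  have hn : (0:ℝ) < (Fintype.card X : ℝ) - 1 := by
    have : (2:ℝ) ≤ (Fintype.card X : ℝ) := by exact_mod_cast hX
    linarith
  have hn0 : (0:ℝ) < (Fintype.card X : ℝ) := by positivity
  set s : ℝ := Real.sqrt (((Fintype.card X : ℝ) - 1) / (Fintype.card X : ℝ)) with hs
  have hs2 : s ^ 2 = ((Fintype.card X : ℝ) - 1) / (Fintype.card X : ℝ) := by
    rw [hs, Real.sq_sqrt (by positivity)]
  have hψ : ∑ a : Fin p → X × Y, conj (tensorPow (pubKey X Y v) p a) *
      tensorPow (pubKey X Y v) p a = 1 := by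
    rw [myTensorSum, myPub1 X Y v hv, one_pow]
  have hφ : ∑ a : Fin p → X × Y, conj (tensorPow (puncKey X Y v xstar) p a) *
      tensorPow (puncKey X Y v xstar) p a = 1 := by
    rw [myTensorSum, myPunc1 X Y v hv xstar hX, one_pow]
  have hc : ∑ a : Fin p → X × Y, conj (tensorPow (pubKey X Y v) p a) *
      tensorPow (puncKey X Y v xstar) p a = ((s ^ p : ℝ) : ℂ) := by
    rw [myTensorSum, myCross X Y v hv xstar hX, ← hs, Complex.ofReal_pow]
  have hM := myHerm (tensorPow (pubKey X Y v) p) (tensorPow (puncKey X Y v xstar) p)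
  refine ⟨hM, ?_, ?_⟩
  · have h := myMaster _ _ (s ^ p) hψ hφ hc hM
    rw [h, ← pow_mul, mul_comm p 2, pow_mul, hs2]
  · have h := myMaster _ _ (s ^ p) hψ hφ hc hM
    rw [h, ← pow_mul, mul_comm p 2, pow_mul, hs2]
    have : ((Fintype.card X : ℝ) - 1) / (Fintype.card X : ℝ)
        = 1 - 1 / (Fintype.card X : ℝ) := by field_simp
    rw [this]; ring
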